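/- arXiv:1506.02979 — 2 statements merged into one kernel-verified Lean document; each statement's English description precedes it below -/
import Mathlib

section
/- Let n ≥ 2. The near-semiring 𝒩 has no left identity element: there is no u ∈ 𝒩 such that ux = x for all x ∈ 𝒩. Equivalently, there is no u ∈ A^+(B_n) such that uf = f for every f ∈ A^+(B_n), where x(uf) = (xu)f (i.e. uf is the map sending each x ∈ B_n to the value of f at the value of u at x). -/
/-!
Common setup: the Brandt semigroup `B n`, self-maps with pointwise addition and
composition product, affine maps, the affine near-semiring `A⁺(Bₙ)`, and the
zero-symmetric near-semiring `𝒩 = A⁺(Bₙ) ∪ {0}`.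
-/

/-- The Brandt semigroup `Bₙ`: pairs `(i,j)` with `i,j ∈ [n]`, together with the
zero element `ϑ` (represented by `none`). -/
abbrev B (n : ℕ) : Type := Option (Fin n × Fin n)

/-- Addition in the Brandt semigroup: `(i,j)+(k,l) = (i,l)` if `j = k`, and `ϑ` otherwise;
`ϑ` is absorbing. -/
def badd {n : ℕ} : B n → B n → B n
  | some (i, j), some (k, l) => if j = k then some (i, l) else none
  | _, _ => none

/-- Pointwise addition of self-maps of `B n`:  `x(f+g) = xf + xg`. -/
def madd {n : ℕ} (f g : B n → B n) : B n → B n := fun x => badd (f x) (g x)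

/-- The product of self-maps of `B n`: `x(fg) = (xf)g`. -/
def mcomp {n : ℕ} (f g : B n → B n) : B n → B n := fun x => g (f x)

/-- An additive endomorphism of the Brandt semigroup. -/
def IsEndo {n : ℕ} (e : B n → B n) : Prop := ∀ a b, e (badd a b) = badd (e a) (e b)

/-- An affine map: the pointwise sum of an additive endomorphism and a constant map. -/
def IsAffine {n : ℕ} (f : B n → B n) : Prop :=
  ∃ e c, IsEndo e ∧ ∀ x, f x = badd (e x) c

/-- `A⁺(Bₙ)`: the subsemigroup of `(M(Bₙ), +)` generated by the affine maps. -/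
inductive Aplus (n : ℕ) : (B n → B n) → Prop
  | affine {f : B n → B n} : IsAffine f → Aplus n f
  | add {f g : B n → B n} : Aplus n f → Aplus n g → Aplus n (madd f g)

lemma isEndo_constBot {n : ℕ} : IsEndo (fun _ : B n => (none : B n)) := by
  intro a b; rfl

lemma isEndo_constIdem {n : ℕ} (p : Fin n) :
    IsEndo (fun _ : B n => (some (p, p) : B n)) := by
  intro a b; simp [badd]

/-- Every constant map is affine. -/
lemma isAffine_const {n : ℕ} (c : B n) : IsAffine (fun _ : B n => c) := by
  match c with
  | none => exact ⟨fun _ => none, none, isEndo_constBot, fun x => rfl⟩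
  | some (p, q) =>
      exact ⟨fun _ => some (p, p), some (p, q), isEndo_constIdem p, fun x => by simp [badd]⟩

lemma aplus_const {n : ℕ} (c : B n) : Aplus n (fun _ : B n => c) :=
  Aplus.affine (isAffine_const c)

lemma aplus_comp_endo {n : ℕ} {e : B n → B n} (he : IsEndo e)
    {f : B n → B n} (hf : Aplus n f) : Aplus n (fun x => e (f x)) := by
  induction hf with
  | affine h =>
      rename_i f0
      obtain ⟨e', c, he', hfe⟩ := h
      refine Aplus.affine ⟨fun x => e (e' x), e c, fun a b => ?_, fun x => ?_⟩
      · show e (e' (badd a b)) = badd (e (e' a)) (e (e' b))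
        rw [he', he]
      · show e (f0 x) = badd (e (e' x)) (e c)
        rw [hfe, he]
  | add h1 h2 ih1 ih2 =>
      rename_i g1 g2
      have heq : (fun x => e (madd g1 g2 x))
          = madd (fun x => e (g1 x)) (fun x => e (g2 x)) := by
        funext x; exact he (g1 x) (g2 x)
      rw [heq]
      exact Aplus.add ih1 ih2

/-- `A⁺(Bₙ)` is closed under the product. -/
lemma aplus_comp {n : ℕ} {f g : B n → B n} (hf : Aplus n f) (hg : Aplus n g) :
    Aplus n (mcomp f g) := by
  induction hg with
  | affine h =>
      rename_i g0
      obtain ⟨e, c, he, hge⟩ := h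
      have heq : mcomp f g0 = madd (fun x => e (f x)) (fun _ => c) := by
        funext x; exact hge (f x)
      rw [heq]
      exact Aplus.add (aplus_comp_endo he hf) (aplus_const c)
  | add h1 h2 ih1 ih2 =>
      exact Aplus.add ih1 ih2

/-- `𝒩 = A⁺(Bₙ) ∪ {0}`: the zero-symmetric affine near-semiring, with a new
zero element `0` (represented by `none`) adjoined to `A⁺(Bₙ)`. -/
abbrev N (n : ℕ) : Type := Option {f : B n → B n // Aplus n f}

instance (n : ℕ) : Zero (N n) := ⟨none⟩

/-- Addition in `𝒩`: `0` is the additive identity; on `A⁺(Bₙ)` it is pointwise addition. -/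
instance (n : ℕ) : Add (N n) :=
  ⟨fun a b =>
    match a, b with
    | none, b => b
    | a, none => a
    | some f, some g => some ⟨madd f.1 g.1, Aplus.add f.2 g.2⟩⟩

/-- Multiplication in `𝒩`: `0` is absorbing; on `A⁺(Bₙ)` it is the product `fg`. -/
instance (n : ℕ) : Mul (N n) :=
  ⟨fun a b =>
    match a, b with
    | some f, some g => some ⟨mcomp f.1 g.1, aplus_comp f.2 g.2⟩
    | _, _ => none⟩

/-- The element of `𝒩` determined by a map in `A⁺(Bₙ)`. -/
def ofA {n : ℕ} {f : B n → B n} (hf : Aplus n f) : N n := some ⟨f, hf⟩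

/-- The constant map `ξ_c`, as an element of `𝒩`. -/
def xiN (n : ℕ) (c : B n) : N n := ofA (aplus_const c)

/-- `𝒞 = C_{Bₙ} ∪ {0}`: the constant maps together with `0`, as a subset of `𝒩`. -/
def Cset (n : ℕ) : Set (N n) := insert 0 (Set.range (xiN n))

/-- The relation `(A⁺(Bₙ) × A⁺(Bₙ)) ∪ {(0,0)}` on `𝒩`. -/
def theta (n : ℕ) (a b : N n) : Prop := (a ≠ 0 ∧ b ≠ 0) ∨ (a = 0 ∧ b = 0)

/-- A congruence of the semigroup `(𝒩, +)`. -/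
structure IsAddCong (n : ℕ) (r : N n → N n → Prop) : Prop where
  refl : ∀ a, r a a
  symm : ∀ {a b}, r a b → r b a
  trans : ∀ {a b c}, r a b → r b c → r a c
  add_right : ∀ {a b} (c), r a b → r (a + c) (b + c)
  add_left : ∀ {a b} (c), r a b → r (c + a) (c + b)

/-- The equivalence relations on `𝒩` whose class of `0` is a right ideal:
compatible with `+` on both sides and with `·` on the right. -/
structure IsRightCong (n : ℕ) (r : N n → N n → Prop) extends IsAddCong n r : Prop where
  mul_right : ∀ {a b} (c), r a b → r (a * c) (b * c)

/-- A congruence of the near-semiring `𝒩`. -/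
structure IsNSCong (n : ℕ) (r : N n → N n → Prop) extends IsAddCong n r : Prop where
  mul_right : ∀ {a b} (c), r a b → r (a * c) (b * c)
  mul_left : ∀ {a b} (c), r a b → r (c * a) (c * b)

/-- The singleton-support map `σ^{(k,l)}_{(p,q)}` sending `(k,l)` to `(p,q)` and
everything else to `ϑ`. -/
def sgl {n : ℕ} (k l p q : Fin n) : B n → B n :=
  fun x => if x = some (k, l) then some (p, q) else none

/-- The `n`-support map `(p,q;σ)` sending `(i,p)` to `(iσ,q)` and everything else to `ϑ`. -/
def nsupp {n : ℕ} (p q : Fin n) (σ : Equiv.Perm (Fin n)) : B n → B n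
  | some (i, j) => if j = p then some (σ i, q) else none
  | none => none

/-- The endomorphism `(i,j) ↦ (iσ, jσ)` of `Bₙ`. -/
def permEndo {n : ℕ} (σ : Equiv.Perm (Fin n)) : B n → B n
  | some (i, j) => some (σ i, σ j)
  | none => none

lemma isEndo_permEndo {n : ℕ} (σ : Equiv.Perm (Fin n)) : IsEndo (permEndo σ) := by
  rintro (_ | ⟨i, j⟩) (_ | ⟨k, l⟩) <;> simp [badd, permEndo]
  by_cases h : j = k
  · simp [h, permEndo]
  · simp [h, fun hc => h (σ.injective hc), permEndo, badd]

lemma aplus_nsupp {n : ℕ} (p q : Fin n) (σ : Equiv.Perm (Fin n)) :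
    Aplus n (nsupp p q σ) := by
  refine Aplus.affine ⟨permEndo σ, some (σ p, q), isEndo_permEndo σ, ?_⟩
  rintro (_ | ⟨i, j⟩)
  · rfl
  · show nsupp p q σ (some (i, j)) = badd (some (σ i, σ j)) (some (σ p, q))
    by_cases h : j = p
    · simp [nsupp, badd, h]
    · simp [nsupp, badd, h, fun hc => h (σ.injective hc)]

lemma sgl_eq_madd {n : ℕ} (k l p q : Fin n) :
    sgl k l p q = madd (fun _ : B n => (some (p, q) : B n)) (nsupp l q (Equiv.swap k q)) := by
  funext x
  rcases x with _ | ⟨i, j⟩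
  · rfl
  · by_cases hj : j = l
    · by_cases hi : i = k
      · subst hi; subst hj
        simp [sgl, madd, nsupp, badd, Equiv.swap_apply_left]
      · have hs : Equiv.swap k q i ≠ q := fun hc =>
          hi ((Equiv.swap k q).injective (hc.trans (Equiv.swap_apply_left k q).symm))
        simp [sgl, madd, nsupp, badd, hj, hi, Ne.symm hs]
    · simp [sgl, madd, nsupp, badd, hj]

lemma aplus_sgl {n : ℕ} (k l p q : Fin n) : Aplus n (sgl k l p q) := by
  rw [sgl_eq_madd]
  exact Aplus.add (aplus_const _) (aplus_nsupp _ _ _)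

/-- The singleton-support map `σ^{(k,l)}_{(p,q)}`, as an element of `𝒩`. -/
def sglN (n : ℕ) (k l p q : Fin n) : N n := ofA (aplus_sgl k l p q)

/-- The `n`-support map `(p,q;σ)`, as an element of `𝒩`. -/
def nsuppN (n : ℕ) (p q : Fin n) (σ : Equiv.Perm (Fin n)) : N n := ofA (aplus_nsupp p q σ)

/-! ### Auxiliary lemmas for `stmt5` -/

lemma badd_none_left' {n : ℕ} (a : B n) : badd none a = none := by
  rcases a with _ | ⟨i, j⟩ <;> rfl

lemma badd_none_right' {n : ℕ} (a : B n) : badd a none = none := by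
  rcases a with _ | ⟨i, j⟩ <;> rfl

/-- Invariant satisfied by all elements of `A⁺(Bₙ)` when `n ≥ 2`:
either constant, or `f ϑ = ϑ` with support contained in a single column. -/
def GoodMap {n : ℕ} (f : B n → B n) : Prop :=
  (∃ c, ∀ x, f x = c) ∨
    (f none = none ∧ ∃ p : Fin n, ∀ i j : Fin n, f (some (i, j)) ≠ none → j = p)

lemma endo_diag_right {n : ℕ} {e : B n → B n} (he : IsEndo e) {i j p q : Fin n}
    (h : e (some (i, j)) = some (p, q)) : e (some (j, j)) = some (q, q) := by
  have h1 : badd (some (i, j) : B n) (some (j, j)) = some (i, j) := by simp [badd]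
  have h2 := he (some (i, j)) (some (j, j))
  rw [h1, h] at h2
  rcases hx : e (some (j, j)) with _ | ⟨k, l⟩
  · rw [hx, badd_none_right'] at h2; exact absurd h2 (by simp)
  · rw [hx] at h2
    simp only [badd] at h2
    by_cases hqk : q = k
    · simp [hqk] at h2
      rw [hqk, ← h2]
    · simp [hqk] at h2

lemma endo_bot {n : ℕ} {e : B n → B n} (he : IsEndo e) :
    e none = none ∨ ∃ p : Fin n, e none = some (p, p) := by
  have h := he none none
  rw [badd_none_left'] at h
  rcases hx : e none with _ | ⟨a, b⟩
  · exact Or.inl rfl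
  · rw [hx] at h
    simp only [badd] at h
    by_cases hba : b = a
    · exact Or.inr ⟨a, by rw [hba]⟩
    · simp [hba] at h

/-- If `e ϑ = (p,p)` and `n ≥ 2` then `e` is the constant map with value `(p,p)`. -/
lemma endo_const_of_bot {n : ℕ} (hn : 2 ≤ n) {e : B n → B n} (he : IsEndo e)
    {p : Fin n} (hp : e none = some (p, p)) : ∀ x, e x = some (p, p) := by
  intro x
  rcases x with _ | ⟨i, j⟩
  · exact hp
  · -- choose k ≠ j
    obtain ⟨k, hk⟩ : ∃ k : Fin n, k ≠ j := by
      rcases Decidable.eq_or_ne (⟨0, by omega⟩ : Fin n) j with h0 | h0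
      · exact ⟨⟨1, by omega⟩, by rw [← h0]; intro hc; exact absurd (congrArg Fin.val hc) (by simp)⟩
      · exact ⟨_, h0⟩
    -- row of e (i,j) is p
    have hrow : ∃ m, e (some (i, j)) = some (p, m) := by
      have h1 : badd (some (i, j) : B n) (some (k, k)) = none := by
        simp [badd, Ne.symm hk]
      have h2 := he (some (i, j)) (some (k, k))
      rw [h1, hp] at h2
      rcases hx : e (some (i, j)) with _ | ⟨a, b⟩
      · rw [hx, badd_none_left'] at h2; exact absurd h2 (by simp)
      · rw [hx] at h2
        rcases hy : e (some (k, k)) with _ | ⟨c, d⟩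
        · rw [hy, badd_none_right'] at h2; exact absurd h2 (by simp)
        · rw [hy] at h2
          simp only [badd] at h2
          by_cases hbc : b = c
          · simp [hbc] at h2
            exact ⟨b, by rw [h2.1]⟩
          · simp [hbc] at h2
    -- col of e (i,j) is p
    have hcol : ∃ m, e (some (i, j)) = some (m, p) := by
      obtain ⟨k', hk'⟩ : ∃ k' : Fin n, k' ≠ i := by
        rcases Decidable.eq_or_ne (⟨0, by omega⟩ : Fin n) i with h0 | h0
        · exact ⟨⟨1, by omega⟩, by rw [← h0]; intro hc; exact absurd (congrArg Fin.val hc) (by simp)⟩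
        · exact ⟨_, h0⟩
      have h1 : badd (some (k', k') : B n) (some (i, j)) = none := by
        simp [badd, hk']
      have h2 := he (some (k', k')) (some (i, j))
      rw [h1, hp] at h2
      rcases hx : e (some (i, j)) with _ | ⟨a, b⟩
      · rw [hx, badd_none_right'] at h2; exact absurd h2 (by simp)
      · rw [hx] at h2
        rcases hy : e (some (k', k')) with _ | ⟨c, d⟩
        · rw [hy, badd_none_left'] at h2; exact absurd h2 (by simp)
        · rw [hy] at h2
          simp only [badd] at h2
          by_cases hda : d = a
          · simp [hda] at h2
            exact ⟨a, by rw [h2.2]⟩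
          · simp [hda] at h2
    obtain ⟨m1, hm1⟩ := hrow
    obtain ⟨m2, hm2⟩ := hcol
    rw [hm1] at hm2
    injection hm2 with hm2
    rw [hm1, (Prod.mk.injEq _ _ _ _).mp hm2 |>.2]

/-- Every affine map is `GoodMap` (for `n ≥ 2`). -/
lemma goodMap_affine {n : ℕ} (hn : 2 ≤ n) {f : B n → B n} (hf : IsAffine f) :
    GoodMap f := by
  obtain ⟨e, c, he, hfe⟩ := hf
  rcases c with _ | ⟨k, l⟩
  · exact Or.inl ⟨none, fun x => by rw [hfe, badd_none_right']⟩
  · rcases endo_bot he with hb | ⟨p, hb⟩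
    · -- right branch
      right
      refine ⟨by rw [hfe, hb, badd_none_left'], ?_⟩
      by_cases hs : ∃ i j : Fin n, f (some (i, j)) ≠ none
      · obtain ⟨i0, j0, hij⟩ := hs
        refine ⟨j0, fun i j hij' => ?_⟩
        -- both have e-value with column k
        have key : ∀ i' j' : Fin n, f (some (i', j')) ≠ none →
            e (some (j', j')) = some (k, k) := by
          intro i' j' hne
          rw [hfe] at hne
          rcases hx : e (some (i', j')) with _ | ⟨a, b⟩
          · rw [hx, badd_none_left'] at hne; exact absurd rfl hne
          · rw [hx] at hne
            simp only [badd] at hne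
            by_cases hbk : b = k
            · have := endo_diag_right he hx
              rw [hbk] at this; exact this
            · simp [hbk] at hne
        have h1 := key i0 j0 hij
        have h2 := key i j hij'
        by_contra hne
        have hadd : badd (some (j, j) : B n) (some (j0, j0)) = none := by
          simp [badd, hne]
        have h3 := he (some (j, j)) (some (j0, j0))
        rw [hadd, hb, h1, h2] at h3
        simp [badd] at h3
      · push_neg at hs
        exact ⟨⟨0, by omega⟩, fun i j hij => absurd (hs i j) hij⟩
    · -- e is constant, so f is constant
      left
      refine ⟨badd (some (p, p)) (some (k, l)), fun x => ?_⟩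
      rw [hfe, endo_const_of_bot hn he hb]

lemma goodMap_madd {n : ℕ} {f g : B n → B n} (hf : GoodMap f) (hg : GoodMap g) :
    GoodMap (madd f g) := by
  rcases hf with ⟨c, hc⟩ | ⟨hf0, p, hp⟩
  · rcases hg with ⟨d, hd⟩ | ⟨hg0, q, hq⟩
    · exact Or.inl ⟨badd c d, fun x => by simp [madd, hc, hd]⟩
    · right
      refine ⟨by simp [madd, hc, hg0, badd_none_right'], q, fun i j hij => ?_⟩
      refine hq i j fun hgn => hij ?_
      simp [madd, hgn, badd_none_right']
  · right
    refine ⟨by simp [madd, hf0, badd_none_left'], p, fun i j hij => ?_⟩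
    refine hp i j fun hfn => hij ?_
    simp [madd, hfn, badd_none_left']

lemma goodMap_aplus {n : ℕ} (hn : 2 ≤ n) {f : B n → B n} (hf : Aplus n f) :
    GoodMap f := by
  induction hf with
  | affine h => exact goodMap_affine hn h
  | add h1 h2 ih1 ih2 => exact goodMap_madd ih1 ih2

/-- Let `n ≥ 2`. The near-semiring `𝒩` has no left identity element;
equivalently, there is no `u ∈ A⁺(Bₙ)` with `uf = f` for every `f ∈ A⁺(Bₙ)`. -/
theorem stmt5 (n : ℕ) (hn : 2 ≤ n) :
    (¬ ∃ u : N n, ∀ x : N n, u * x = x) ∧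
    (¬ ∃ u : B n → B n, Aplus n u ∧ ∀ f : B n → B n, Aplus n f → mcomp u f = f) := by
  have key : ¬ ∃ u : B n → B n, Aplus n u ∧ ∀ f : B n → B n, Aplus n f → mcomp u f = f := by
    rintro ⟨u, hu, hid⟩
    have hfix : ∀ k l : Fin n, u (some (k, l)) = some (k, l) := by
      intro k l
      have h := hid (sgl k l k l) (aplus_sgl k l k l)
      have h2 : sgl k l k l (u (some (k, l))) = sgl k l k l (some (k, l)) := congrFun h _
      rw [show sgl k l k l (some (k, l)) = some (k, l) from by simp [sgl]] at h2
      unfold sgl at h2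
      split at h2
      · assumption
      · exact absurd h2 (by simp)
    have hnone : u none = none := by
      rcases hx : u none with _ | ⟨k, l⟩
      · rfl
      · have h := hid (sgl k l k l) (aplus_sgl k l k l)
        have h2 : sgl k l k l (u none) = sgl k l k l none := congrFun h none
        rw [hx] at h2
        simp [sgl] at h2
    have hg := goodMap_aplus hn hu
    rcases hg with ⟨c, hc⟩ | ⟨h0, p, hp⟩
    · have e1 := hc (some ((⟨0, by omega⟩ : Fin n), (⟨0, by omega⟩ : Fin n)))
      have e2 := hc (some ((⟨0, by omega⟩ : Fin n), (⟨1, by omega⟩ : Fin n)))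
      rw [hfix] at e1 e2
      have := e1.trans e2.symm
      simp [Fin.ext_iff] at this
    · have e1 := hp ⟨0, by omega⟩ ⟨0, by omega⟩ (by rw [hfix]; simp)
      have e2 := hp ⟨0, by omega⟩ ⟨1, by omega⟩ (by rw [hfix]; simp)
      have := e1.trans e2.symm
      simp [Fin.ext_iff] at this
  refine ⟨?_, key⟩
  rintro ⟨u, hu⟩
  rcases u with _ | ⟨g, hg⟩
  · have h := hu (xiN n (some ((⟨0, by omega⟩ : Fin n), (⟨0, by omega⟩ : Fin n))))
    change (none : N n) = some ⟨_, aplus_const _⟩ at h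
    cases h
  · apply key
    refine ⟨g, hg, fun f hf => ?_⟩
    have h := hu (ofA hf)
    have h2 : (⟨mcomp g f, aplus_comp hg hf⟩ : {f // Aplus n f}) = ⟨f, hf⟩ :=
      Option.some.inj h
    exact congrArg Subtype.val h2
end

section
/- Let n ≥ 2 and let ∼ be a congruence of the near-semiring 𝒩. If (i,j;σ) ∼ (k,l;ρ) for two distinct n-support maps (i,j;σ) ≠ (k,l;ρ) (with i,j,k,l ∈ [n] and σ, ρ permutations of [n]), then there exists h ∈ A^+(B_n) with h ≠ ξ_ϑ and h ∼ ξ_ϑ. -/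
lemma xiN_ne_zero {n : ℕ} (c : B n) : xiN n c ≠ 0 := fun h => Option.some_ne_none _ h

lemma xiN_inj {n : ℕ} {c d : B n} (h : xiN n c = xiN n d) : c = d := by
  have h1 := Option.some.inj h
  exact congrFun (congrArg Subtype.val h1) none

lemma mul_xi_cast {n : ℕ} (c : B n) (p q : Fin n) (σ : Equiv.Perm (Fin n)) :
    xiN n c * nsuppN n p q σ = xiN n (nsupp p q σ c) := rfl

lemma add_xi {n : ℕ} (c d : B n) : xiN n c + xiN n d = xiN n (badd c d) := rfl

/-- Let `n ≥ 2` and let `∼` be a congruence of the near-semiring `𝒩`.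
If `(i,j;σ) ∼ (k,l;ρ)` for two distinct `n`-support maps, then some `h ∈ A⁺(Bₙ)` with
`h ≠ ξ_ϑ` satisfies `h ∼ ξ_ϑ`. -/
theorem stmt13 (n : ℕ) (hn : 2 ≤ n) (r : N n → N n → Prop) (hcong : IsNSCong n r)
    (i j k l : Fin n) (σ ρ : Equiv.Perm (Fin n))
    (hne : nsuppN n i j σ ≠ nsuppN n k l ρ)
    (h : r (nsuppN n i j σ) (nsuppN n k l ρ)) :
    ∃ h' : N n, h' ≠ 0 ∧ h' ≠ xiN n none ∧ r h' (xiN n none) := by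
  by_cases hik : i = k
  · subst hik
    by_cases hjl : j = l
    · subst hjl
      have hσρ : σ ≠ ρ := fun hE => hne (by rw [hE])
      obtain ⟨a, ha⟩ : ∃ a, σ a ≠ ρ a := by
        by_contra hc
        push_neg at hc
        exact hσρ (Equiv.ext hc)
      have h1 := hcong.mul_left (xiN n (some (a, i))) h
      rw [mul_xi_cast, mul_xi_cast] at h1
      have e1 : nsupp i j σ (some (a, i)) = some (σ a, j) := by simp [nsupp]
      have e2 : nsupp i j ρ (some (a, i)) = some (ρ a, j) := by simp [nsupp]
      rw [e1, e2] at h1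
      have h2 := hcong.add_left (xiN n (some (σ a, σ a))) h1
      rw [add_xi, add_xi] at h2
      have e3 : badd (some ((σ a : Fin n), σ a)) (some (σ a, j)) = some (σ a, j) := by
        simp [badd]
      have e4 : badd (some ((σ a : Fin n), σ a)) (some (ρ a, j)) = none := by
        simp [badd, ha]
      rw [e3, e4] at h2
      exact ⟨xiN n (some (σ a, j)), xiN_ne_zero _, fun hc => by
        simpa using xiN_inj hc, h2⟩
    · have h1 := hcong.mul_left (xiN n (some (i, i))) h
      rw [mul_xi_cast, mul_xi_cast] at h1
      have e1 : nsupp i j σ (some (i, i)) = some (σ i, j) := by simp [nsupp]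
      have e2 : nsupp i l ρ (some (i, i)) = some (ρ i, l) := by simp [nsupp]
      rw [e1, e2] at h1
      have h2 := hcong.add_right (xiN n (some (j, j))) h1
      rw [add_xi, add_xi] at h2
      have e3 : badd (some ((σ i : Fin n), j)) (some (j, j)) = some (σ i, j) := by
        simp [badd]
      have e4 : badd (some ((ρ i : Fin n), l)) (some (j, j)) = none := by
        simp [badd, Ne.symm hjl]
      rw [e3, e4] at h2
      exact ⟨xiN n (some (σ i, j)), xiN_ne_zero _, fun hc => by
        simpa using xiN_inj hc, h2⟩
  · have h1 := hcong.mul_left (xiN n (some (i, i))) h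
    rw [mul_xi_cast, mul_xi_cast] at h1
    have e1 : nsupp i j σ (some (i, i)) = some (σ i, j) := by simp [nsupp]
    have e2 : nsupp k l ρ (some (i, i)) = none := by simp [nsupp, hik]
    rw [e1, e2] at h1
    exact ⟨xiN n (some (σ i, j)), xiN_ne_zero _, fun hc => by
      simpa using xiN_inj hc, h1⟩
end
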